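/- Let J be a nonempty finite index set, and for each j ∈ J let O_j be a nonempty finite set of options and π_j : O_j → ℝ a probability vector (π_j(k) ≥ 0 for all k and ∑_{k ∈ O_j} π_j(k) = 1). A configuration is z ∈ Π_{j ∈ J} O_j with probability p(z) = ∏_{j ∈ J} π_j(z_j). Let ℰ : (Π_{j ∈ J} O_j) → ℝ and e* ∈ ℝ. Assume: (a) ∑_z p(z) · |ℰ(z) − e*| = 0; and (b) no decision has two options with the same cost, i.e., for any two configurations z, z′ and any j ∈ J with z_j ≠ z′_j and z_k = z′_k for all k ≠ j, one has ℰ(z) ≠ ℰ(z′). Then each π_j is one-hot: for every j ∈ J there exists k ∈ O_j with π_j(k) = 1 and π_j(k′) = 0 for all k′ ≠ k. -/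
import Mathlib


/-- **Lemma 2 (UDC).** If the regularizer `E[|ℰ(z) − e*|]` vanishes and no decision
has two options with the same cost (changing a single coordinate always changes the
total cost), then every decision distribution `π j` is one-hot. -/
theorem stmt_3 {J : Type*} [Fintype J] [DecidableEq J] [Nonempty J]
    {O : J → Type*} [∀ j, Fintype (O j)] [∀ j, Nonempty (O j)]
    (π : ∀ j, O j → ℝ)
    (hnn : ∀ j, ∀ k : O j, 0 ≤ π j k)
    (hsum : ∀ j, ∑ k : O j, π j k = 1)
    (E : (∀ j, O j) → ℝ) (estar : ℝ)
    (h : ∑ z : ∀ j, O j, (∏ j, π j (z j)) * |E z - estar| = 0)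
    (hdistinct : ∀ (z z' : ∀ j, O j) (j : J),
      z j ≠ z' j → (∀ k, k ≠ j → z k = z' k) → E z ≠ E z') :
    ∀ j : J, ∃ k : O j, π j k = 1 ∧ ∀ k' : O j, k' ≠ k → π j k' = 0 := by
  classical
  -- each term of the sum is zero
  have hterm : ∀ z : ∀ j, O j, (∏ j, π j (z j)) * |E z - estar| = 0 := by
    have := (Finset.sum_eq_zero_iff_of_nonneg (fun z _ =>
      mul_nonneg (Finset.prod_nonneg fun j _ => hnn j (z j)) (abs_nonneg _))).mp h
    exact fun z => this z (Finset.mem_univ z)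
  have hE : ∀ z : ∀ j, O j, (∀ j, 0 < π j (z j)) → E z = estar := by
    intro z hz
    have hp : 0 < ∏ j, π j (z j) := Finset.prod_pos fun j _ => hz j
    have := hterm z
    have habs : |E z - estar| = 0 := by
      rcases mul_eq_zero.mp this with h' | h'
      · exact absurd h' (ne_of_gt hp)
      · exact h'
    linarith [abs_eq_zero.mp habs, sub_eq_zero.mp (abs_eq_zero.mp habs)]
  -- a base configuration with positive probability in each coordinate
  have hexpos : ∀ j, ∃ k : O j, 0 < π j k := by
    intro j
    by_contra hc
    push_neg at hc
    have hz : ∀ k : O j, π j k = 0 := fun k => le_antisymm (hc k) (hnn j k)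
    have h1 := hsum j
    rw [Finset.sum_eq_zero (fun k _ => hz k)] at h1
    norm_num at h1
  choose z0 hz0 using hexpos
  intro j
  -- uniqueness of positive option
  have huniq : ∀ k k' : O j, 0 < π j k → 0 < π j k' → k = k' := by
    intro k k' hk hk'
    by_contra hne
    set z := Function.update z0 j k with hz
    set z' := Function.update z0 j k' with hz'
    have hzj : ∀ i, 0 < π i (z i) := by
      intro i
      by_cases hij : i = j
      · subst hij; simp [z, Function.update_self]; exact hk
      · simp [z, Function.update_of_ne hij]; exact hz0 i
    have hzj' : ∀ i, 0 < π i (z' i) := by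
      intro i
      by_cases hij : i = j
      · subst hij; simp [z', Function.update_self]; exact hk'
      · simp [z', Function.update_of_ne hij]; exact hz0 i
    have h1 := hE z hzj
    have h2 := hE z' hzj'
    exact hdistinct z z' j (by simp [z, z', Function.update_self]; exact hne)
      (fun i hij => by simp [z, z', Function.update_of_ne hij]) (h1.trans h2.symm)
  have hk := hz0 j
  set k := z0 j
  refine ⟨k, ?_, ?_⟩
  · have hzero : ∀ k' : O j, k' ≠ k → π j k' = 0 := by
      intro k' hne
      by_contra hne0
      have hpos : 0 < π j k' := lt_of_le_of_ne (hnn j k') (Ne.symm hne0)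
      exact hne (huniq k' k hpos hk)
    have := hsum j
    rwa [Finset.sum_eq_single k (fun k' _ hne => hzero k' hne)
      (fun hk' => absurd (Finset.mem_univ k) hk')] at this
  · intro k' hne
    by_contra hne0
    have hpos : 0 < π j k' := lt_of_le_of_ne (hnn j k') (Ne.symm hne0)
    exact hne (huniq k' k hpos hk)
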